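/- Let g ∈ ℚ⟦X⟧ be the power series satisfying g = 1 - X + X·g + X·g² (equivalently, g = (1 - x - √(1 - 6x + 5x²))/(2x)), and set g̃ = g·(1 - X)⁻¹. Then in the polynomial ring (ℚ⟦X⟧)[Y] one has the identity g̃·(Y - X·Y - X·Y² + X²·Y² - 1) = (Y - g̃)·(1 - X·Y·g). Equivalently, the generating function of the Riordan array (g̃, Xg) factors as g̃/(1 - yxg) = (1 - g̃/y)·1/(1 - x - xy + x²y - 1/y), exhibiting lattice paths with step set {(1,0), (1,1), (-1)·(2,1), (0,-1)} (where the (2,1) step carries weight -1). -/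

import Mathlib

/-- Let `g : ℚ⟦X⟧` satisfy `g = 1 - X + Xg + Xg²` and set `g̃ = g·(1-X)⁻¹`.
Then in `(ℚ⟦X⟧)[Y]` one has `g̃·(Y - XY - XY² + X²Y² - 1) = (Y - g̃)·(1 - XYg)`: the
generating function of the Riordan array `(g̃, Xg)` factors as
`g̃/(1-yxg) = (1 - g̃/y)·1/(1 - x - xy + x²y - 1/y)`, exhibiting the step set
`{(1,0), (1,1), (-1)·(2,1), (0,-1)}`. -/
theorem stmt_19 (g : PowerSeries ℚ)
    (hg : g = 1 - PowerSeries.X + PowerSeries.X * g + PowerSeries.X * g ^ 2) :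
    Polynomial.C (g * (1 - PowerSeries.X)⁻¹) * (Polynomial.X
        - Polynomial.C (PowerSeries.X : PowerSeries ℚ) * Polynomial.X
        - Polynomial.C (PowerSeries.X : PowerSeries ℚ) * Polynomial.X ^ 2
        + Polynomial.C ((PowerSeries.X : PowerSeries ℚ) ^ 2) * Polynomial.X ^ 2 - 1)
    = (Polynomial.X - Polynomial.C (g * (1 - PowerSeries.X)⁻¹))
        * (1 - Polynomial.C (PowerSeries.X : PowerSeries ℚ) * Polynomial.X * Polynomial.C g) := by
  set u : PowerSeries ℚ := (1 - PowerSeries.X)⁻¹ with hu_def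
  have hunit : PowerSeries.constantCoeff (1 - PowerSeries.X : PowerSeries ℚ) ≠ 0 := by
    simp
  have hu : (1 - PowerSeries.X) * u = 1 := PowerSeries.mul_inv_cancel _ hunit
  have h1 : (Polynomial.C ((1 - PowerSeries.X) * u) : Polynomial (PowerSeries ℚ))
      = Polynomial.C 1 := congrArg Polynomial.C hu
  have h2 : (Polynomial.C g : Polynomial (PowerSeries ℚ))
      = Polynomial.C (1 - PowerSeries.X + PowerSeries.X * g + PowerSeries.X * g ^ 2) :=
    congrArg Polynomial.C hg
  simp only [map_mul, map_add, map_sub, map_one, map_pow] at h1 h2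
  simp only [map_mul, map_pow]
  linear_combination
    (-(Polynomial.C (PowerSeries.X : PowerSeries ℚ) * Polynomial.C g * Polynomial.X ^ 2)
      + Polynomial.X) * h1 + (Polynomial.C u * Polynomial.X) * h2
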